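/- For any two full-support probability distributions μ ≠ π on 𝒴, the value of the optimization problem min_{(q_1,q_2)} ( D(q_1‖μ) + D(q_2‖π) ), where the minimum is over pairs of probability distributions q_1, q_2 on 𝒴 satisfying D(q_2‖π) ≥ D(q_1‖π), is equal to 2·B(μ, π). -/
import Mathlib


open Filter Finset Topology

noncomputable section

/-- `p` is a probability distribution on the finite alphabet. -/
def IsProb {𝓨 : Type} [Fintype 𝓨] (p : 𝓨 → ℝ) : Prop :=
  (∀ y, 0 ≤ p y) ∧ ∑ y, p y = 1

/-- `p` has full support. -/
def FullSupport {𝓨 : Type} (p : 𝓨 → ℝ) : Prop := ∀ y, 0 < p y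

/-- Relative entropy `D(q‖p)` (natural log, convention `0·log 0 = 0`,
which holds since `Real.log 0 = 0` in Mathlib). -/
def KL {𝓨 : Type} [Fintype 𝓨] (q p : 𝓨 → ℝ) : ℝ :=
  ∑ y, q y * Real.log (q y / p y)

/-- Bhattacharyya distance `B(p,q) = -log ∑ √(p y) √(q y)`. -/
def Bhat {𝓨 : Type} [Fintype 𝓨] (p q : 𝓨 → ℝ) : ℝ :=
  - Real.log (∑ y, Real.sqrt (p y) * Real.sqrt (q y))

/-- Gibbs' inequality. -/
lemma gibbs_aux {𝓨 : Type} [Fintype 𝓨] (q p : 𝓨 → ℝ)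
    (hq0 : ∀ y, 0 ≤ q y) (hq1 : ∑ y, q y = 1)
    (hp0 : ∀ y, 0 < p y) (hp1 : ∑ y, p y = 1) : 0 ≤ KL q p := by
  have h : ∀ y ∈ Finset.univ, q y - p y ≤ q y * Real.log (q y / p y) := by
    intro y _
    rcases eq_or_lt_of_le (hq0 y) with h | h
    · simp [← h]; linarith [(hp0 y).le]
    · have hl := Real.log_le_sub_one_of_pos (div_pos (hp0 y) h)
      have hlog : Real.log (q y / p y) = - Real.log (p y / q y) := by
        rw [← Real.log_inv, inv_div]
      have h2 : q y * Real.log (p y / q y) ≤ q y * (p y / q y - 1) :=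
        mul_le_mul_of_nonneg_left hl h.le
      have h3 : q y * (p y / q y - 1) = p y - q y := by field_simp
      rw [hlog]; nlinarith
  have := Finset.sum_le_sum h
  rw [Finset.sum_sub_distrib, hq1, hp1] at this
  simpa [KL] using this

/-- `min { D(q₁‖μ)+D(q₂‖π) : D(q₂‖π) ≥ D(q₁‖π) } = 2·B(μ,π)`. -/
theorem statement6 (𝓨 : Type) [Fintype 𝓨] [Nonempty 𝓨]
    (μ π : 𝓨 → ℝ) (hμ : IsProb μ) (hπ : IsProb π)
    (hμf : FullSupport μ) (hπf : FullSupport π) (hne : μ ≠ π) :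
    IsLeast {x : ℝ | ∃ q₁ q₂ : 𝓨 → ℝ, IsProb q₁ ∧ IsProb q₂ ∧
        KL q₂ π ≥ KL q₁ π ∧
        x = KL q₁ μ + KL q₂ π}
      (2 * Bhat μ π) := by
  obtain ⟨hμ0, hμ1⟩ := hμ
  obtain ⟨hπ0, hπ1⟩ := hπ
  set Z : ℝ := ∑ y, Real.sqrt (μ y) * Real.sqrt (π y) with hZ
  have hZpos : 0 < Z :=
    Finset.sum_pos (fun y _ => mul_pos (Real.sqrt_pos.2 (hμf y)) (Real.sqrt_pos.2 (hπf y)))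
      Finset.univ_nonempty
  set qs : 𝓨 → ℝ := fun y => Real.sqrt (μ y) * Real.sqrt (π y) / Z with hqs
  have hqspos : ∀ y, 0 < qs y := fun y =>
    div_pos (mul_pos (Real.sqrt_pos.2 (hμf y)) (Real.sqrt_pos.2 (hπf y))) hZpos
  have hqssum : ∑ y, qs y = 1 := by
    simp only [hqs]
    rw [← Finset.sum_div, ← hZ, div_self hZpos.ne']
  have hBhat : Bhat μ π = - Real.log Z := rfl
  -- key identity: D(q‖μ) + D(q‖π) = 2 D(q‖qs) + 2 B(μ,π)
  have ident : ∀ q : 𝓨 → ℝ, (∀ y, 0 ≤ q y) → ∑ y, q y = 1 →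
      KL q μ + KL q π = 2 * KL q qs + 2 * Bhat μ π := by
    intro q hq0 hq1
    have key : ∀ y, q y * Real.log (q y / μ y) + q y * Real.log (q y / π y)
        = 2 * (q y * Real.log (q y / qs y)) + (2 * Bhat μ π) * q y := by
      intro y
      rcases eq_or_lt_of_le (hq0 y) with h | h
      · simp [← h]
      · have hμy := hμf y; have hπy := hπf y; have hqsy := hqspos y
        rw [Real.log_div h.ne' hμy.ne', Real.log_div h.ne' hπy.ne',
            Real.log_div h.ne' hqsy.ne']
        have hlqs : Real.log (qs y)
            = Real.log (Real.sqrt (μ y)) + Real.log (Real.sqrt (π y)) - Real.log Z := by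
          simp only [hqs]
          rw [Real.log_div (by positivity) hZpos.ne',
            Real.log_mul (by positivity) (by positivity)]
        rw [hlqs, Real.log_sqrt hμy.le, Real.log_sqrt hπy.le, hBhat]
        ring
    simp only [KL]
    calc (∑ y, q y * Real.log (q y / μ y)) + ∑ y, q y * Real.log (q y / π y)
        = ∑ y, (q y * Real.log (q y / μ y) + q y * Real.log (q y / π y)) :=
          (Finset.sum_add_distrib).symm
      _ = ∑ y, (2 * (q y * Real.log (q y / qs y)) + (2 * Bhat μ π) * q y) :=
          Finset.sum_congr rfl (fun y _ => key y)
      _ = 2 * (∑ y, q y * Real.log (q y / qs y)) + (2 * Bhat μ π) * ∑ y, q y := by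
          rw [Finset.sum_add_distrib, ← Finset.mul_sum, ← Finset.mul_sum]
      _ = 2 * (∑ y, q y * Real.log (q y / qs y)) + 2 * Bhat μ π := by rw [hq1]; ring
  have hself : KL qs qs = 0 := by
    apply Finset.sum_eq_zero
    intro y _
    rw [div_self (hqspos y).ne', Real.log_one, mul_zero]
  constructor
  · refine ⟨qs, qs, ⟨fun y => (hqspos y).le, hqssum⟩, ⟨fun y => (hqspos y).le, hqssum⟩,
      le_refl _, ?_⟩
    have := ident qs (fun y => (hqspos y).le) hqssum
    rw [hself] at this
    linarith
  · rintro x ⟨q₁, q₂, hq1, hq2, hcon, rfl⟩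
    have h1 := gibbs_aux q₁ qs hq1.1 hq1.2 hqspos hqssum
    have h2 := ident q₁ hq1.1 hq1.2
    linarith
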